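/- Let δ < 1/2 and k ∈ ℕ. For all sufficiently large d ∈ ℕ there is an ε > 0 such that for all α ∈ 𝕋^d, the set H̃(α;k,ε) is a δ-nonrecurrent subset of ℤ. -/

import Mathlib

open Pointwise

/-- The upper asymptotic density of a set of integers:
`limsup_{N→∞} |A ∩ {1,…,N}| / N`. -/
noncomputable def upperDensity (A : Set ℤ) : ℝ :=
  Filter.limsup (fun N : ℕ => ((A ∩ Set.Icc (1 : ℤ) (N : ℤ)).ncard : ℝ) / N) Filter.atTop

/-- `S ⊆ ℤ` is `δ`-nonrecurrent: there is `A ⊆ ℤ` with `d̄(A) > δ` and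
`(A - A) ∩ S = ∅`. -/
def IntNonrecurrent (δ : ℝ) (S : Set ℤ) : Prop :=
  ∃ A : Set ℤ, δ < upperDensity A ∧ ∀ a ∈ A, ∀ b ∈ A, a - b ∉ S

/-- The Hamming ball of radius `k` around `(1/2, …, 1/2)` inside the subgroup
`G_d = {0, 1/2}^d ⊆ 𝕋^d`: points of `G_d` with at most `k` coordinates
different from `1/2`. -/
def HkHalf (d k : ℕ) : Set (Fin d → UnitAddCircle) :=
  {x | (∀ j, x j = 0 ∨ x j = ((1 / 2 : ℝ) : UnitAddCircle)) ∧
    {j | x j ≠ ((1 / 2 : ℝ) : UnitAddCircle)}.ncard ≤ k}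

/-- The open box `V_ε = {x ∈ 𝕋^d : max_j ‖x_j‖ < ε}`. -/
def Veps (d : ℕ) (ε : ℝ) : Set (Fin d → UnitAddCircle) :=
  {x | ∀ j, ‖x j‖ < ε}

/-- The `ε`-copy of `H_k(𝟙)` determined by `α ∈ 𝕋^d`:
`H̃(α; k, ε) = {n ∈ ℤ : nα ∈ H_k((1/2,…,1/2)) + V_ε}`. -/
def Htilde (d : ℕ) (α : Fin d → UnitAddCircle) (k : ℕ) (ε : ℝ) : Set ℤ :=
  {n : ℤ | n • α ∈ HkHalf d k + Veps d ε}

/-! ### Auxiliary material for the proof -/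

open Finset

section Aux

/-- A representative in `ℝ` of a point of the circle. -/
noncomputable def circleRep (θ : UnitAddCircle) : ℝ := Quotient.out θ

lemma circleRep_spec (θ : UnitAddCircle) : ((circleRep θ : ℝ) : UnitAddCircle) = θ :=
  QuotientAddGroup.out_eq' θ

/-- `i`-th grid arc membership: the representative of `θ - i/M` lies in `[0, K/M) mod 1`. -/
def inArc (M K : ℕ) (θ : UnitAddCircle) (i : Fin M) : Prop :=
  Int.fract (circleRep θ - (i : ℕ) / (M : ℝ)) < (K : ℝ) / M

noncomputable instance (M K : ℕ) (θ : UnitAddCircle) : DecidablePred (inArc M K θ) :=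
  fun _ => Classical.dec _

/-- The candidate nonrecurrent sets: integers `n` such that `n • α` lies in at least `T`
of the arcs determined by `c`. -/
def Agood (d M K T : ℕ) (α : Fin d → UnitAddCircle) (c : Fin d → Fin M) : Set ℤ :=
  {n | T ≤ (Finset.univ.filter (fun j : Fin d => inArc M K ((n • α) j) (c j))).card}

noncomputable instance (d M K T : ℕ) (α : Fin d → UnitAddCircle) (c : Fin d → Fin M) (n : ℤ) :
    Decidable (n ∈ Agood d M K T α c) := Classical.dec _

lemma card_filter_lt_fin (M K : ℕ) (hK : K ≤ M) :
    (Finset.univ.filter (fun i : Fin M => (i : ℕ) < K)).card = K := by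
  classical
  have h : (Finset.univ.filter (fun i : Fin M => (i : ℕ) < K)).card
      = (Finset.univ : Finset (Fin K)).card := by
    refine Finset.card_bij' (fun i hi => (⟨(i : ℕ), (Finset.mem_filter.mp hi).2⟩ : Fin K))
      (fun j _ => (⟨(j : ℕ), lt_of_lt_of_le j.2 hK⟩ : Fin M)) ?_ ?_ ?_ ?_
    · intro a ha; exact Finset.mem_univ _
    · intro j _; exact Finset.mem_filter.mpr ⟨Finset.mem_univ _, j.2⟩
    · intro a ha; ext; rfl
    · intro j _; ext; rfl
  simpa using h

lemma arc_count (M K : ℕ) (hM : 0 < M) (hK : K ≤ M) (θ : ℝ) :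
    (Finset.univ.filter
      (fun i : Fin M => Int.fract (θ - (i : ℕ) / (M : ℝ)) < (K : ℝ) / M)).card = K := by
  classical
  have hM0 : (M : ℝ) ≠ 0 := Nat.cast_ne_zero.mpr hM.ne'
  have hMpos : (0:ℝ) < M := Nat.cast_pos.mpr hM
  set F : ℤ := ⌊(M : ℝ) * θ⌋ with hF
  set φ : ℝ := Int.fract ((M : ℝ) * θ) with hφ
  have hφ0 : 0 ≤ φ := Int.fract_nonneg _
  have hφ1 : φ < 1 := Int.fract_lt_one _
  have hMZ : (0:ℤ) < (M:ℤ) := by exact_mod_cast hM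
  have key : ∀ i : Fin M,
      (Int.fract (θ - (i : ℕ) / (M : ℝ)) < (K : ℝ) / M) ↔ ((F - (i : ℕ)) % (M : ℤ) < (K : ℤ)) := by
    intro i
    set m : ℤ := (F - (i : ℕ)) % (M : ℤ) with hm
    set e : ℤ := (F - (i : ℕ)) / (M : ℤ) with he
    have hdm : (M : ℤ) * e + m = F - (i : ℕ) := Int.mul_ediv_add_emod _ _
    have hm0 : 0 ≤ m := Int.emod_nonneg _ hMZ.ne'
    have hmM : m < (M : ℤ) := Int.emod_lt_of_pos _ hMZ
    have hmM1 : m + 1 ≤ (M : ℤ) := hmM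
    have hmMR : (m : ℝ) + 1 ≤ (M : ℝ) := by exact_mod_cast hmM1
    have hm0R : (0:ℝ) ≤ (m : ℝ) := by exact_mod_cast hm0
    have hMθ : (M : ℝ) * θ = (F : ℝ) + φ := by
      rw [hφ, hF]; exact (Int.floor_add_fract _).symm
    have hFR : (F : ℝ) - (i : ℕ) = (M : ℝ) * (e : ℝ) + (m : ℝ) := by
      have := congrArg (fun z : ℤ => (z : ℝ)) hdm
      push_cast at this
      linarith
    have hsplit : θ - (i : ℕ) / (M : ℝ) = (e : ℝ) + ((m : ℝ) + φ) / M := by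
      have hθ : θ = ((F : ℝ) + φ) / M := by
        field_simp at hMθ ⊢
        linarith
      rw [hθ]
      field_simp
      linarith [hFR]
    have hfr : Int.fract (θ - (i : ℕ) / (M : ℝ)) = ((m : ℝ) + φ) / M := by
      rw [hsplit, Int.fract_intCast_add, Int.fract_eq_self.mpr ?_]
      constructor
      · positivity
      · rw [div_lt_one hMpos]
        linarith
    rw [hfr, div_lt_div_iff_of_pos_right hMpos]
    constructor
    · intro h
      have : (m : ℝ) < K := by linarith
      exact_mod_cast this
    · intro h
      have h1 : m + 1 ≤ (K : ℤ) := Int.lt_iff_add_one_le.mp h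
      have : (m : ℝ) + 1 ≤ (K : ℝ) := by exact_mod_cast h1
      linarith
  have gdef : ∀ i : Fin M, ((F - (i:ℕ)) % (M:ℤ)).toNat < M := by
    intro i
    have h1 : (F - (i:ℕ)) % (M:ℤ) < (M:ℤ) := Int.emod_lt_of_pos _ hMZ
    have h0 : 0 ≤ (F - (i:ℕ)) % (M:ℤ) := Int.emod_nonneg _ hMZ.ne'
    omega
  set g : Fin M → Fin M := fun i => ⟨((F - (i:ℕ)) % (M:ℤ)).toNat, gdef i⟩ with hg
  have hginv : ∀ i : Fin M, g (g i) = i := by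
    intro i
    ext
    simp only [hg]
    have h0 : 0 ≤ (F - (i:ℕ)) % (M:ℤ) := Int.emod_nonneg _ hMZ.ne'
    have hcast : ((((F - (i:ℕ)) % (M:ℤ)).toNat : ℕ) : ℤ) = (F - (i:ℕ)) % (M:ℤ) :=
      Int.toNat_of_nonneg h0
    have hstep : (F - ((((F - (i:ℕ)) % (M:ℤ)).toNat : ℕ) : ℤ)) % (M:ℤ) = ((i:ℕ) : ℤ) % (M:ℤ) := by
      rw [hcast]
      have hdm : (M : ℤ) * ((F - (i:ℕ)) / (M:ℤ)) + (F - (i:ℕ)) % (M:ℤ) = F - (i : ℕ) :=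
        Int.mul_ediv_add_emod _ _
      have : F - (F - (i:ℕ)) % (M:ℤ) = ((i:ℕ):ℤ) + (M:ℤ) * ((F - (i:ℕ)) / (M:ℤ)) := by linarith
      rw [this, Int.add_mul_emod_self_left]
    rw [hstep, Int.emod_eq_of_lt (by positivity) (by exact_mod_cast i.2)]
    simp
  have hcnt : ∀ i : Fin M, (Int.fract (θ - (i : ℕ) / (M : ℝ)) < (K : ℝ) / M) ↔ ((g i : ℕ) < K) := by
    intro i
    rw [key i]
    simp only [hg]
    have h0 : 0 ≤ (F - (i:ℕ)) % (M:ℤ) := Int.emod_nonneg _ hMZ.ne'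
    omega
  calc (Finset.univ.filter
      (fun i : Fin M => Int.fract (θ - (i : ℕ) / (M : ℝ)) < (K : ℝ) / M)).card
      = (Finset.univ.filter (fun i : Fin M => (g i : ℕ) < K)).card := by
        apply congrArg
        apply Finset.filter_congr
        intro i _
        simp only [hcnt i]
    _ = (Finset.univ.filter (fun i : Fin M => (i : ℕ) < K)).card := by
        refine Finset.card_bij' (fun i _ => g i) (fun j _ => g j) ?_ ?_ ?_ ?_
        · intro a ha; exact Finset.mem_filter.mpr ⟨Finset.mem_univ _, (Finset.mem_filter.mp ha).2⟩
        · intro j hj; exact Finset.mem_filter.mpr ⟨Finset.mem_univ _,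
            by rw [hginv]; exact (Finset.mem_filter.mp hj).2⟩
        · intro a _; exact hginv a
        · intro a _; exact hginv a
    _ = K := card_filter_lt_fin M K hK

lemma arc_count' (M K : ℕ) (hM : 0 < M) (hK : K ≤ M) (θ : UnitAddCircle) :
    (Finset.univ.filter (fun i : Fin M => inArc M K θ i)).card = K := by
  classical
  have heq : (Finset.univ.filter (fun i : Fin M => inArc M K θ i))
      = (Finset.univ.filter
        (fun i : Fin M => Int.fract (circleRep θ - (i : ℕ) / (M : ℝ)) < (K : ℝ) / M)) :=
    Finset.filter_congr (fun i _ => Iff.rfl)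
  rw [heq]
  exact arc_count M K hM hK (circleRep θ)

end Aux

section Aux2

lemma central_sq (m : ℕ) : (Nat.choose (2*m) m)^2 * (3*m+1) ≤ 4^(2*m) := by
  induction m with
  | zero => simp
  | succ m ih =>
    have A1 : (2*m+2) * Nat.choose (2*m+1) m = Nat.choose (2*m+2) (m+1) * (m+1) := by
      have := Nat.add_one_mul_choose_eq (2*m+1) m
      simpa [Nat.succ_eq_add_one, mul_comm, mul_assoc, mul_left_comm, add_assoc] using this
    have A2 : (2*m+1) * Nat.choose (2*m) m = Nat.choose (2*m+1) (m+1) * (m+1) := by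
      have := Nat.add_one_mul_choose_eq (2*m) m
      simpa [Nat.succ_eq_add_one] using this
    have A3 : Nat.choose (2*m+1) (m+1) = Nat.choose (2*m+1) m := Nat.choose_symm_half m
    set c := Nat.choose (2*m) m with hc
    set X := Nat.choose (2*m+2) (m+1) with hX
    have B1 : X * (m+1) = (2*m+2) * Nat.choose (2*m+1) m := A1.symm
    have B2 : Nat.choose (2*m+1) m * (m+1) = (2*m+1) * c := by rw [← A3, A2]
    have key : X * ((m+1)*(m+1)) = c * ((2*m+1)*(2*m+2)) := by
      calc X * ((m+1)*(m+1)) = (X * (m+1)) * (m+1) := by ring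
        _ = ((2*m+2) * Nat.choose (2*m+1) m) * (m+1) := by rw [B1]
        _ = (2*m+2) * (Nat.choose (2*m+1) m * (m+1)) := by ring
        _ = (2*m+2) * ((2*m+1) * c) := by rw [B2]
        _ = c * ((2*m+1)*(2*m+2)) := by ring
    have hgoal : X^2 * (3*(m+1)+1) ≤ 4^(2*(m+1)) := by
      have hpos : 0 < (m+1)^4 * (3*m+1) := by positivity
      refine Nat.le_of_mul_le_mul_right ?_ hpos
      have e1 : X^2 * (3*(m+1)+1) * ((m+1)^4 * (3*m+1))
          = (X * ((m+1)*(m+1)))^2 * ((3*m+4) * (3*m+1)) := by ring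
      have e2 : (X * ((m+1)*(m+1)))^2 * ((3*m+4) * (3*m+1))
          = (c^2 * (3*m+1)) * ((2*m+1)^2*(2*m+2)^2*(3*m+4)) := by rw [key]; ring
      rw [e1, e2]
      have poly : (2*m+1)^2*(2*m+2)^2*(3*m+4) ≤ 16 * ((m+1)^4 * (3*m+1)) := by nlinarith
      calc (c^2 * (3*m+1)) * ((2*m+1)^2*(2*m+2)^2*(3*m+4))
          ≤ 4^(2*m) * (16 * ((m+1)^4 * (3*m+1))) := Nat.mul_le_mul ih poly
        _ = (4^(2*m) * 16) * ((m+1)^4 * (3*m+1)) := by ring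
        _ = 4^(2*(m+1)) * ((m+1)^4 * (3*m+1)) := by rw [pow_succ, pow_succ]; ring_nf
    have e : 2*(m+1) = 2*m+2 := by ring
    rw [e] at hgoal ⊢
    exact hgoal

lemma cb_sq (d : ℕ) : (Nat.choose d (d/2))^2 * (d+1) ≤ 4^d := by
  rcases Nat.even_or_odd d with ⟨m, hm⟩ | ⟨m, hm⟩
  · subst hm
    have h2 : (m + m) = 2*m := by ring
    rw [h2]
    have hdiv : (2*m)/2 = m := by omega
    rw [hdiv]
    calc (Nat.choose (2*m) m)^2 * (2*m+1) ≤ (Nat.choose (2*m) m)^2 * (3*m+1) := by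
          exact Nat.mul_le_mul_left _ (by omega)
      _ ≤ 4^(2*m) := central_sq m
  · subst hm
    have hdiv : (2*m+1)/2 = m := by omega
    rw [hdiv]
    have A2 : (2*m+1) * Nat.choose (2*m) m = Nat.choose (2*m+1) (m+1) * (m+1) := by
      have := Nat.add_one_mul_choose_eq (2*m) m
      simpa [Nat.succ_eq_add_one] using this
    have A3 : Nat.choose (2*m+1) (m+1) = Nat.choose (2*m+1) m := Nat.choose_symm_half m
    set c := Nat.choose (2*m) m with hc
    set Y := Nat.choose (2*m+1) m with hY
    have key : Y * (m+1) = (2*m+1) * c := by rw [← A3, ← A2]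
    have hpos : 0 < (m+1)^2 * (3*m+1) := by positivity
    refine Nat.le_of_mul_le_mul_right ?_ hpos
    have e1 : Y^2 * (2*m+1+1) * ((m+1)^2 * (3*m+1))
        = (Y*(m+1))^2 * ((2*m+2) * (3*m+1)) := by ring
    rw [e1, key]
    have poly : (2*m+1)^2 * ((2*m+2)) ≤ 4 * ((m+1)^2 * (3*m+1)) := by nlinarith
    calc ((2*m+1)*c)^2 * ((2*m+2)*(3*m+1))
        = (c^2 * (3*m+1)) * ((2*m+1)^2 * (2*m+2)) := by ring
      _ ≤ 4^(2*m) * (4 * ((m+1)^2 * (3*m+1))) := by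
          refine Nat.mul_le_mul (central_sq m) ?_
          nlinarith
      _ = 4^(2*m+1) * ((m+1)^2 * (3*m+1)) := by rw [pow_succ]; ring


lemma Wcard_eq (d T : ℕ) :
    ((Finset.univ.powerset.filter (fun W : Finset (Fin d) => T ≤ W.card)).card)
      = ∑ i ∈ Finset.Ico T (d+1), Nat.choose d i := by
  classical
  have hsplit : (Finset.univ.powerset.filter (fun W : Finset (Fin d) => T ≤ W.card))
      = (Finset.Ico T (d+1)).biUnion (fun i => Finset.powersetCard i (Finset.univ : Finset (Fin d))) := by
    ext W
    simp only [Finset.mem_filter, Finset.mem_powerset, Finset.mem_biUnion, Finset.mem_Ico,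
      Finset.mem_powersetCard]
    constructor
    · rintro ⟨hsub, hT⟩
      exact ⟨W.card, ⟨hT, Nat.lt_succ_of_le (by simpa using Finset.card_le_univ W)⟩, hsub, rfl⟩
    · rintro ⟨i, ⟨hT, _⟩, hsub, hcard⟩
      exact ⟨hsub, hcard ▸ hT⟩
  rw [hsplit, Finset.card_biUnion]
  · apply Finset.sum_congr rfl
    intro i _
    rw [Finset.card_powersetCard]
    simp
  · intro i _ j _ hij
    apply Finset.disjoint_left.mpr
    intro W hW hW'
    rw [Finset.mem_powersetCard] at hW hW'
    exact hij (hW.2 ▸ hW'.2.symm ▸ rfl)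

lemma tail_ge (d T s : ℕ) (hT2 : d + 1 ≤ 2*T) (hTd : T ≤ d) (hs : 2*T ≤ d + 1 + 2*s) :
    2^d ≤ 2 * (∑ i ∈ Finset.Ico T (d+1), Nat.choose d i) + (2*s) * Nat.choose d (d/2) := by
  have h1 : ∑ i ∈ Finset.range (d+1), Nat.choose d i = 2^d := Nat.sum_range_choose d
  have hle1 : d + 1 - T ≤ T := by omega
  have hle2 : T ≤ d + 1 := by omega
  have hsplit1 : ∑ i ∈ Finset.range (d+1-T), Nat.choose d i
      + ∑ i ∈ Finset.Ico (d+1-T) (d+1), Nat.choose d i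
      = ∑ i ∈ Finset.range (d+1), Nat.choose d i :=
    Finset.sum_range_add_sum_Ico _ (by omega)
  have hsplit2 : ∑ i ∈ Finset.Ico (d+1-T) T, Nat.choose d i
      + ∑ i ∈ Finset.Ico T (d+1), Nat.choose d i
      = ∑ i ∈ Finset.Ico (d+1-T) (d+1), Nat.choose d i :=
    Finset.sum_Ico_consecutive _ hle1 hle2
  have hrefl : ∑ i ∈ Finset.range (d+1-T), Nat.choose d i
      = ∑ i ∈ Finset.Ico T (d+1), Nat.choose d i := by
    refine Finset.sum_nbij' (fun i => d - i) (fun i => d - i) ?_ ?_ ?_ ?_ ?_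
    · intro i hi
      rw [Finset.mem_range] at hi
      rw [Finset.mem_Ico]
      omega
    · intro i hi
      rw [Finset.mem_Ico] at hi
      rw [Finset.mem_range]
      omega
    · intro i hi
      rw [Finset.mem_range] at hi
      omega
    · intro i hi
      rw [Finset.mem_Ico] at hi
      omega
    · intro i hi
      rw [Finset.mem_range] at hi
      exact (Nat.choose_symm (by omega)).symm
  have hmid : ∑ i ∈ Finset.Ico (d+1-T) T, Nat.choose d i ≤ (2*s) * Nat.choose d (d/2) := by
    calc ∑ i ∈ Finset.Ico (d+1-T) T, Nat.choose d i
        ≤ (Finset.Ico (d+1-T) T).card • Nat.choose d (d/2) :=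
          Finset.sum_le_card_nsmul _ _ _ (fun i _ => Nat.choose_le_middle i d)
      _ = (T - (d+1-T)) * Nat.choose d (d/2) := by rw [Nat.card_Ico]; rfl
      _ ≤ (2*s) * Nat.choose d (d/2) := Nat.mul_le_mul_right _ (by omega)
  omega

lemma ngood_ge (d M K T : ℕ) (hM : 0 < M) (hK : K ≤ M) (h2K : 2*K ≤ M)
    (α : Fin d → UnitAddCircle) (n : ℤ) :
    ((Finset.univ.powerset.filter (fun W : Finset (Fin d) => T ≤ W.card)).card) * K^d
      ≤ (Finset.univ.filter (fun c : Fin d → Fin M => n ∈ Agood d M K T α c)).card := by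
  classical
  set arcF : Fin d → Finset (Fin M) := fun j => Finset.univ.filter (inArc M K ((n • α) j)) with harcF
  have harc : ∀ j, (arcF j).card = K := fun j => arc_count' M K hM hK _
  set patt : (Fin d → Fin M) → Finset (Fin d)
    := fun c => Finset.univ.filter (fun j => inArc M K ((n • α) j) (c j)) with hpatt
  set 𝒲 : Finset (Finset (Fin d)) :=
    Finset.univ.powerset.filter (fun W : Finset (Fin d) => T ≤ W.card) with hW
  have hmem : ∀ c ∈ Finset.univ.filter (fun c : Fin d → Fin M => n ∈ Agood d M K T α c),
      patt c ∈ 𝒲 := by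
    intro c hc
    rw [Finset.mem_filter] at hc
    rw [hW, Finset.mem_filter, Finset.mem_powerset]
    exact ⟨Finset.subset_univ _, hc.2⟩
  rw [Finset.card_eq_sum_card_fiberwise hmem]
  have hfiber : ∀ W ∈ 𝒲,
      ((Finset.univ.filter (fun c : Fin d → Fin M => n ∈ Agood d M K T α c)).filter
        (fun c => patt c = W))
      = Fintype.piFinset (fun j => if j ∈ W then arcF j else (arcF j)ᶜ) := by
    intro W hWmem
    rw [hW, Finset.mem_filter, Finset.mem_powerset] at hWmem
    ext c
    simp only [Finset.mem_filter, Finset.mem_univ, true_and, Fintype.mem_piFinset]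
    constructor
    · rintro ⟨_, hpc⟩
      intro j
      by_cases hj : j ∈ W
      · simp only [hj, if_true, harcF, Finset.mem_filter, Finset.mem_univ, true_and]
        have : j ∈ patt c := hpc ▸ hj
        rw [hpatt] at this
        simpa using this
      · simp only [hj, if_false, Finset.mem_compl, harcF, Finset.mem_filter, Finset.mem_univ,
          true_and]
        intro hcontra
        exact hj (hpc ▸ (by rw [hpatt]; exact Finset.mem_filter.mpr ⟨Finset.mem_univ _, hcontra⟩ : j ∈ patt c))
    · intro h
      have hpc : patt c = W := by
        rw [hpatt]
        ext j
        simp only [Finset.mem_filter, Finset.mem_univ, true_and]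
        constructor
        · intro hin
          by_contra hj
          have := h j
          rw [if_neg hj, Finset.mem_compl, harcF, Finset.mem_filter] at this
          exact this ⟨Finset.mem_univ _, hin⟩
        · intro hj
          have := h j
          rw [if_pos hj, harcF, Finset.mem_filter] at this
          exact this.2
      refine ⟨?_, hpc⟩
      show n ∈ Agood d M K T α c
      show T ≤ (patt c).card
      rw [hpc]
      exact hWmem.2
  calc 𝒲.card * K^d = ∑ _W ∈ 𝒲, K^d := by rw [Finset.sum_const, smul_eq_mul]
    _ ≤ ∑ W ∈ 𝒲, ((Finset.univ.filter (fun c : Fin d → Fin M => n ∈ Agood d M K T α c)).filter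
        (fun c => patt c = W)).card := by
        refine Finset.sum_le_sum ?_
        intro W hWmem
        rw [hfiber W hWmem, Fintype.card_piFinset]
        have : ∀ j : Fin d, K ≤ (if j ∈ W then arcF j else (arcF j)ᶜ).card := by
          intro j
          by_cases hj : j ∈ W
          · rw [if_pos hj, harc j]
          · rw [if_neg hj, Finset.card_compl, harc j]
            simp only [Fintype.card_fin]
            omega
        calc K^d = ∏ _j : Fin d, K := by rw [Finset.prod_const]; simp
          _ ≤ ∏ j : Fin d, (if j ∈ W then arcF j else (arcF j)ᶜ).card :=
            Finset.prod_le_prod' (fun j _ => this j)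

-- ===== difference-freeness =====
lemma intcoe (m : ℤ) : (((m : ℝ)) : UnitAddCircle) = 0 := by
  rw [QuotientAddGroup.eq_zero_iff]
  exact AddSubgroup.intCast_mem_zmultiples_one m

lemma norm_coe_le (u : ℝ) : ‖(u : UnitAddCircle)‖ ≤ |u| := by
  rw [UnitAddCircle.norm_eq]
  simpa using round_le u 0

lemma norm_diff_lt {x y t L : ℝ}
    (hx : Int.fract (x - t) < L) (hy : Int.fract (y - t) < L) :
    ‖((x - y : ℝ) : UnitAddCircle)‖ < L := by
  have hxy : x - y = (Int.fract (x - t) - Int.fract (y - t)) + ((⌊x - t⌋ - ⌊y - t⌋ : ℤ) : ℝ) := by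
    unfold Int.fract
    push_cast
    ring
  have hz : (((⌊x - t⌋ - ⌊y - t⌋ : ℤ) : ℝ) : UnitAddCircle) = 0 := intcoe _
  have heq : ((x - y : ℝ) : UnitAddCircle)
      = ((Int.fract (x - t) - Int.fract (y - t) : ℝ) : UnitAddCircle) := by
    rw [hxy, QuotientAddGroup.mk_add, hz, add_zero]
  rw [heq]
  refine lt_of_le_of_lt (norm_coe_le _) ?_
  rw [abs_sub_lt_iff]
  constructor
  · have := Int.fract_nonneg (y - t); linarith
  · have := Int.fract_nonneg (x - t); linarith

lemma norm_half : ‖(((1:ℝ)/2 : ℝ) : UnitAddCircle)‖ = 1/2 := by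
  have := AddCircle.norm_half_period_eq (p := (1:ℝ))
  simpa using this

lemma diff_free (d M K T k : ℕ) (hM : 0 < M) (hKM : (K:ℝ)/M ≤ 1/2 - 1/(2*M))
    (hT : d + (k + 1) ≤ 2*T) (α : Fin d → UnitAddCircle) (c : Fin d → Fin M) :
    ∀ a ∈ Agood d M K T α c, ∀ b ∈ Agood d M K T α c,
      a - b ∉ Htilde d α k (1/(2*(M:ℝ))) := by
  classical
  intro a ha b hb hmem
  obtain ⟨x, hx, v, hv, hxv⟩ := hmem
  set Sa := Finset.univ.filter (fun j : Fin d => inArc M K ((a • α) j) (c j)) with hSa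
  set Sb := Finset.univ.filter (fun j : Fin d => inArc M K ((b • α) j) (c j)) with hSb
  have hcard : k + 1 ≤ (Sa ∩ Sb).card := by
    have h1 : (Sa ∩ Sb).card + (Sa ∪ Sb).card = Sa.card + Sb.card :=
      Finset.card_inter_add_card_union Sa Sb
    have h2 : (Sa ∪ Sb).card ≤ d := by
      calc (Sa ∪ Sb).card ≤ (Finset.univ : Finset (Fin d)).card := Finset.card_le_univ _
        _ = d := by simp
    have h3 : T ≤ Sa.card := ha
    have h4 : T ≤ Sb.card := hb
    omega
  have hMR : (0:ℝ) < M := Nat.cast_pos.mpr hM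
  -- each j in Sa ∩ Sb has x j ≠ 1/2
  have hxj : ∀ j ∈ Sa ∩ Sb, x j ≠ ((1 / 2 : ℝ) : UnitAddCircle) := by
    intro j hj heq
    rw [Finset.mem_inter] at hj
    have hja : inArc M K ((a • α) j) (c j) := (Finset.mem_filter.mp hj.1).2
    have hjb : inArc M K ((b • α) j) (c j) := (Finset.mem_filter.mp hj.2).2
    unfold inArc at hja hjb
    have hnorm : ‖((circleRep ((a • α) j) - circleRep ((b • α) j) : ℝ) : UnitAddCircle)‖ < (K:ℝ)/M :=
      norm_diff_lt hja hjb
    have hrepr : ((circleRep ((a • α) j) - circleRep ((b • α) j) : ℝ) : UnitAddCircle)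
        = ((a - b) • α) j := by
      rw [QuotientAddGroup.mk_sub, circleRep_spec, circleRep_spec]
      have : ((a - b) • α) j = (a-b) • (α j) := rfl
      rw [this, sub_zsmul, sub_eq_add_neg]
      rfl
    rw [hrepr] at hnorm
    -- on the other hand, ((a-b) • α) j = x j + v j with x j = 1/2
    have hval : ((a - b) • α) j = x j + v j := by rw [← hxv]; rfl
    rw [hval, heq] at hnorm
    have hvj : ‖v j‖ < 1/(2*(M:ℝ)) := hv j
    have hhalf : (1:ℝ)/2 - 1/(2*(M:ℝ)) < ‖((1 / 2 : ℝ) : UnitAddCircle) + v j‖ := by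
      have htri : ‖((1 / 2 : ℝ) : UnitAddCircle)‖ - ‖v j‖
          ≤ ‖((1 / 2 : ℝ) : UnitAddCircle) + v j‖ := by
        have h2 : ‖((1 / 2 : ℝ) : UnitAddCircle)‖ = ‖(((1 / 2 : ℝ) : UnitAddCircle) + v j) - v j‖ := by
          congr 1
          abel
        rw [h2]
        have := norm_sub_le (((1 / 2 : ℝ) : UnitAddCircle) + v j) (v j)
        linarith
      rw [norm_half] at htri
      linarith
    have : (K:ℝ)/M < (K:ℝ)/M := by linarith
    exact lt_irrefl _ this
  -- contradiction with ncard ≤ k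
  have hsubset : ((Sa ∩ Sb : Finset (Fin d)) : Set (Fin d))
      ⊆ {j | x j ≠ ((1 / 2 : ℝ) : UnitAddCircle)} := by
    intro j hj
    exact hxj j (by simpa using hj)
  have hk1 : k + 1 ≤ {j | x j ≠ ((1 / 2 : ℝ) : UnitAddCircle)}.ncard := by
    calc k + 1 ≤ (Sa ∩ Sb).card := hcard
      _ = ((Sa ∩ Sb : Finset (Fin d)) : Set (Fin d)).ncard := (Set.ncard_coe_finset _).symm
      _ ≤ {j | x j ≠ ((1 / 2 : ℝ) : UnitAddCircle)}.ncard :=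
        Set.ncard_le_ncard hsubset (Set.toFinite _)
  have := hx.2
  omega


lemma exists_good_c (d M K T : ℕ) (hM : 0 < M) (hK : K ≤ M) (h2K : 2*K ≤ M)
    (α : Fin d → UnitAddCircle) :
    ∃ c : Fin d → Fin M,
      ((((Finset.univ.powerset.filter (fun W : Finset (Fin d) => T ≤ W.card)).card) * K^d : ℕ) : ℝ)
          / ((M^d : ℕ) : ℝ)
        ≤ upperDensity (Agood d M K T α c) := by
  classical
  have hNE : Nonempty (Fin M) := ⟨⟨0, hM⟩⟩
  set G : ℕ := ((Finset.univ.powerset.filter (fun W : Finset (Fin d) => T ≤ W.card)).card) * K^d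
    with hG
  have key : ∀ N : ℕ, ∃ c : Fin d → Fin M,
      N * G ≤ M^d * ((Finset.Icc (1:ℤ) (N:ℤ)).filter (· ∈ Agood d M K T α c)).card := by
    intro N
    set cnt : (Fin d → Fin M) → ℕ :=
      fun c => ((Finset.Icc (1:ℤ) (N:ℤ)).filter (· ∈ Agood d M K T α c)).card with hcnt
    have hdouble : ∑ c : Fin d → Fin M, cnt c
        = ∑ n ∈ Finset.Icc (1:ℤ) (N:ℤ),
            (Finset.univ.filter (fun c : Fin d → Fin M => n ∈ Agood d M K T α c)).card := by
      simp_rw [hcnt, Finset.card_filter]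
      rw [Finset.sum_comm]
    have hIcc : (Finset.Icc (1:ℤ) (N:ℤ)).card = N := by
      rw [Int.card_Icc]
      simp
    have hlow : N * G ≤ ∑ c : Fin d → Fin M, cnt c := by
      rw [hdouble]
      calc N * G = ∑ _n ∈ Finset.Icc (1:ℤ) (N:ℤ), G := by rw [Finset.sum_const, hIcc, smul_eq_mul]
        _ ≤ _ := Finset.sum_le_sum (fun n _ => ngood_ge d M K T hM hK h2K α n)
    obtain ⟨c, hc, hmax⟩ := Finset.exists_max_image Finset.univ cnt Finset.univ_nonempty
    refine ⟨c, ?_⟩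
    calc N * G ≤ ∑ c : Fin d → Fin M, cnt c := hlow
      _ ≤ (Finset.univ : Finset (Fin d → Fin M)).card • cnt c :=
        Finset.sum_le_card_nsmul _ _ _ (fun x _ => hmax x (Finset.mem_univ x))
      _ = M^d * cnt c := by
        rw [smul_eq_mul, Finset.card_univ, Fintype.card_fun]
        simp
  choose cf hcf using key
  obtain ⟨cstar, hfib⟩ := Finite.exists_infinite_fiber cf
  have hfreq : ∃ᶠ N in Filter.atTop, cf N = cstar :=
    Nat.frequently_atTop_iff_infinite.mpr (Set.infinite_coe_iff.mp hfib)
  refine ⟨cstar, ?_⟩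
  have hMd : (0:ℝ) < ((M^d : ℕ) : ℝ) := by positivity
  have hsetN : ∀ N : ℕ, Agood d M K T α cstar ∩ Set.Icc (1:ℤ) (N:ℤ)
      = (((Finset.Icc (1:ℤ) (N:ℤ)).filter (· ∈ Agood d M K T α cstar) : Finset ℤ) : Set ℤ) := by
    intro N
    ext n
    simp only [Set.mem_inter_iff, Set.mem_Icc, Finset.coe_filter, Finset.mem_Icc, Set.mem_setOf_eq]
    tauto
  refine Filter.le_limsup_of_frequently_le ?_ ?_
  · have h1 : ∀ᶠ N : ℕ in Filter.atTop, 1 ≤ N := Filter.eventually_ge_atTop 1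
    refine (hfreq.and_eventually h1).mono ?_
    rintro N ⟨hNc, hN1⟩
    have hcnt := hcf N
    rw [hNc] at hcnt
    rw [hsetN N, Set.ncard_coe_finset]
    set C : ℕ := ((Finset.Icc (1:ℤ) (N:ℤ)).filter (· ∈ Agood d M K T α cstar)).card
    have hNR : (0:ℝ) < N := by exact_mod_cast hN1
    rw [div_le_div_iff₀ hMd hNR]
    have : ((N * G : ℕ) : ℝ) ≤ ((M^d * C : ℕ) : ℝ) := by exact_mod_cast hcnt
    push_cast at this ⊢
    linarith
  · refine Filter.isBoundedUnder_of ⟨1, ?_⟩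
    intro N
    rcases Nat.eq_zero_or_pos N with h0 | hpos
    · subst h0
      norm_num
    · have hNR : (0:ℝ) < N := by exact_mod_cast hpos
      rw [hsetN N, Set.ncard_coe_finset, div_le_one hNR]
      have h1 : ((Finset.Icc (1:ℤ) (N:ℤ)).filter (· ∈ Agood d M K T α cstar)).card
          ≤ (Finset.Icc (1:ℤ) (N:ℤ)).card := Finset.card_filter_le _ _
      have h2 : (Finset.Icc (1:ℤ) (N:ℤ)).card = N := by rw [Int.card_Icc]; simp
      rw [h2] at h1
      exact_mod_cast h1

lemma sq_le_imp {a b : ℝ} (hb : 0 ≤ b) (h : a^2 ≤ b^2) (ha : 0 ≤ a) : a ≤ b := by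
  nlinarith

lemma rho_ge (d k : ℕ) (hd : 2*k+5 ≤ d) :
    ((1:ℝ)/2 - ((k:ℝ)+2)/Real.sqrt ((d:ℝ)+1)) * (1 - 1/(d:ℝ))
      ≤ (((Finset.univ.powerset.filter
            (fun W : Finset (Fin d) => (d+1)/2 + (k+1) ≤ W.card)).card : ℝ)
          * ((d:ℝ)^2-1)^d) / (2*(d:ℝ)^2)^d := by
  classical
  set T : ℕ := (d+1)/2 + (k+1) with hT
  have hd1 : (1:ℝ) ≤ (d:ℝ) := by
    have : 1 ≤ d := by omega
    exact_mod_cast this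
  have hdR : (0:ℝ) < (d:ℝ) := by linarith
  set P : ℝ := ((Finset.univ.powerset.filter (fun W : Finset (Fin d) => T ≤ W.card)).card : ℝ)
    with hP
  set cb : ℝ := ((Nat.choose d (d/2) : ℕ) : ℝ) with hcb
  set S : ℝ := Real.sqrt ((d:ℝ)+1) with hS
  have hSpos : 0 < S := Real.sqrt_pos.mpr (by linarith)
  have hApos : (0:ℝ) < 2^d := by positivity
  have hcb0 : 0 ≤ cb := by rw [hcb]; positivity
  have hP0 : 0 ≤ P := by rw [hP]; positivity
  -- tail bound
  have htail : (2:ℝ)^d ≤ 2*P + (2*((k:ℝ)+2))*cb := by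
    have h := tail_ge d T (k+2) (by omega) (by omega) (by omega)
    rw [← Wcard_eq d T] at h
    have h2 : ((2^d : ℕ) : ℝ)
        ≤ ((2 * ((Finset.univ.powerset.filter (fun W : Finset (Fin d) => T ≤ W.card)).card)
          + (2*(k+2)) * Nat.choose d (d/2) : ℕ) : ℝ) := by exact_mod_cast h
    rw [hP, hcb]
    push_cast at h2 ⊢
    linarith
  -- central binomial bound : cb * S ≤ 2^d
  have hcbS : cb * S ≤ 2^d := by
    refine sq_le_imp hApos.le ?_ (by positivity)
    have h : (((Nat.choose d (d/2))^2 * (d+1) : ℕ) : ℝ) ≤ (((4:ℕ)^d : ℕ) : ℝ) := by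
      exact_mod_cast cb_sq d
    have hSq : S^2 = (d:ℝ)+1 := Real.sq_sqrt (by linarith)
    have h4 : ((4:ℝ))^d = ((2:ℝ)^d)^2 := by
      rw [← pow_mul, mul_comm d 2, pow_mul]; norm_num
    push_cast at h
    calc (cb*S)^2 = cb^2 * S^2 := by ring
      _ = cb^2 * ((d:ℝ)+1) := by rw [hSq]
      _ ≤ (4:ℝ)^d := by rw [hcb]; push_cast; nlinarith [h]
      _ = ((2:ℝ)^d)^2 := h4
  -- P/2^d ≥ 1/2 - (k+2)/S
  have hPA : 1/2 - ((k:ℝ)+2)/S ≤ P / 2^d := by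
    rw [le_div_iff₀ hApos]
    have hcbA : cb ≤ 2^d / S := by
      rw [le_div_iff₀ hSpos]; exact hcbS
    have expand : (1/2 - ((k:ℝ)+2)/S) * 2^d = 2^d/2 - ((k:ℝ)+2) * (2^d/S) := by
      field_simp
    rw [expand]
    have hk0 : (0:ℝ) ≤ (k:ℝ)+2 := by positivity
    nlinarith [mul_le_mul_of_nonneg_left hcbA hk0]
  -- Bernoulli : 1 - 1/d ≤ (1 - 1/d^2)^d
  set x : ℝ := 1 - 1/(d:ℝ)^2 with hx
  have hx0 : 0 ≤ x := by
    rw [hx]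
    have : 1/(d:ℝ)^2 ≤ 1 := by
      rw [div_le_one (by positivity)]
      nlinarith
    linarith
  have h12 : 1/(d:ℝ)^2 ≤ 1 := by
    rw [div_le_one (by positivity)]
    nlinarith
  have hbern : 1 - 1/(d:ℝ) ≤ x^d := by
    have h := one_add_mul_le_pow (a := -(1/(d:ℝ)^2)) (by linarith) d
    have e1 : 1 + (d:ℝ) * -(1/(d:ℝ)^2) = 1 - 1/(d:ℝ) := by
      field_simp
      ring
    have e2 : (1 + -(1/(d:ℝ)^2)) = x := by rw [hx]; ring
    rw [e1, e2] at h
    exact h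
  -- RHS equals P * x^d / 2^d
  have hM0 : (2*(d:ℝ)^2) ≠ 0 := by positivity
  have hrhs : (P * ((d:ℝ)^2-1)^d) / (2*(d:ℝ)^2)^d = P * x^d / 2^d := by
    have hxKM : x = ((d:ℝ)^2-1) * 2 / (2*(d:ℝ)^2) := by
      rw [hx]; field_simp
    have hMd : ((2:ℝ)*(d:ℝ)^2)^d ≠ 0 := by positivity
    have h2d : ((2:ℝ))^d ≠ 0 := by positivity
    rw [hxKM, div_pow, div_eq_div_iff hMd h2d, mul_assoc, mul_assoc, div_mul_cancel₀ _ hMd, mul_pow]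
  rw [hrhs]
  -- final chain
  have hxd0 : (0:ℝ) ≤ x^d := pow_nonneg hx0 d
  have hfrac : 1/(d:ℝ) ≤ 1 := by
    rw [div_le_one hdR]; exact hd1
  calc ((1:ℝ)/2 - ((k:ℝ)+2)/S) * (1 - 1/(d:ℝ))
      ≤ (P / 2^d) * (1 - 1/(d:ℝ)) := mul_le_mul_of_nonneg_right hPA (by linarith)
    _ ≤ (P / 2^d) * x^d := mul_le_mul_of_nonneg_left hbern (div_nonneg hP0 hApos.le)
    _ = P * x^d / 2^d := by ring

end Aux2

/-- For `δ < 1/2` and `k ∈ ℕ`, for all sufficiently large `d` there is an `ε > 0`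
such that `H̃(α; k, ε)` is `δ`-nonrecurrent for every `α ∈ 𝕋^d`. -/
theorem Htilde_nonrecurrent (δ : ℝ) (hδ : δ < 1 / 2) (k : ℕ) :
    ∃ d₀ : ℕ, ∀ d ≥ d₀, ∃ ε > (0 : ℝ), ∀ α : Fin d → UnitAddCircle,
      IntNonrecurrent δ (Htilde d α k ε) := by
  classical
  set γ : ℝ := min (1/2 - δ) (1/2) with hγ
  have hγpos : 0 < γ := lt_min (by linarith) (by norm_num)
  have hγhalf : γ ≤ 1/2 := min_le_right _ _
  have hδγ : δ ≤ 1/2 - γ := by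
    have h := min_le_left (1/2 - δ) (1/2)
    rw [← hγ] at h
    linarith
  refine ⟨max (max (⌈(4*((k:ℝ)+2)/γ)^2⌉₊ + 1) (⌈4/γ⌉₊ + 1)) (2*k+5), fun d hd => ?_⟩
  have hd5 : 2*k+5 ≤ d := le_trans (le_max_right _ _) hd
  have hdc1 : ⌈(4*((k:ℝ)+2)/γ)^2⌉₊ ≤ d := by
    have := le_trans (le_trans (le_max_left _ _) (le_max_left _ _)) hd
    omega
  have hdc2 : ⌈4/γ⌉₊ ≤ d := by
    have := le_trans (le_trans (le_max_right _ _) (le_max_left _ _)) hd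
    omega
  have hd1 : (1:ℝ) ≤ (d:ℝ) := by
    have : 1 ≤ d := by omega
    exact_mod_cast this
  have hdR : (0:ℝ) < (d:ℝ) := by linarith
  -- numeric smallness of the two error terms
  have hSpos : 0 < Real.sqrt ((d:ℝ)+1) := Real.sqrt_pos.mpr (by linarith)
  have hterm1 : ((k:ℝ)+2)/Real.sqrt ((d:ℝ)+1) ≤ γ/4 := by
    have hx : ((4*((k:ℝ)+2)/γ)^2 : ℝ) ≤ (d:ℝ) := by
      have := Nat.ceil_le.mp hdc1
      exact this
    have hb : (0:ℝ) < 4*((k:ℝ)+2)/γ := by positivity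
    have hsq : 4*((k:ℝ)+2)/γ ≤ Real.sqrt ((d:ℝ)+1) := by
      calc 4*((k:ℝ)+2)/γ = Real.sqrt ((4*((k:ℝ)+2)/γ)^2) := (Real.sqrt_sq hb.le).symm
        _ ≤ Real.sqrt ((d:ℝ)+1) := Real.sqrt_le_sqrt (by linarith)
    calc ((k:ℝ)+2)/Real.sqrt ((d:ℝ)+1) ≤ ((k:ℝ)+2)/(4*((k:ℝ)+2)/γ) :=
          div_le_div_of_nonneg_left (by positivity) hb hsq
      _ = γ/4 := by
          field_simp
  have hterm2 : 1/(d:ℝ) ≤ γ/4 := by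
    have hx : (4/γ : ℝ) ≤ (d:ℝ) := Nat.ceil_le.mp hdc2
    have hb : (0:ℝ) < 4/γ := by positivity
    calc 1/(d:ℝ) ≤ 1/(4/γ) := div_le_div_of_nonneg_left (by norm_num) hb hx
      _ = γ/4 := by field_simp
  have hterm1nn : 0 ≤ ((k:ℝ)+2)/Real.sqrt ((d:ℝ)+1) := by positivity
  have hterm2nn : 0 ≤ 1/(d:ℝ) := by positivity
  have hf : δ < (1/2 - ((k:ℝ)+2)/Real.sqrt ((d:ℝ)+1)) * (1 - 1/(d:ℝ)) := by
    nlinarith [mul_nonneg hterm1nn hterm2nn]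
  -- parameters
  set M : ℕ := 2*d^2 with hMdef
  set K : ℕ := d^2 - 1 with hKdef
  set T : ℕ := (d+1)/2 + (k+1) with hTdef
  have hd2 : 1 ≤ d^2 := by nlinarith [hd5]
  have hM : 0 < M := by
    rw [hMdef]; omega
  have hKM : K ≤ M := by rw [hKdef, hMdef]; omega
  have h2KM : 2*K ≤ M := by rw [hKdef, hMdef]; omega
  have hMR : (0:ℝ) < (M:ℕ) := by exact_mod_cast hM
  refine ⟨1/(2*((M:ℕ):ℝ)), by positivity, fun α => ?_⟩
  obtain ⟨c, hc⟩ := exists_good_c d M K T hM hKM h2KM α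
  refine ⟨Agood d M K T α c, ?_, ?_⟩
  · -- density
    refine lt_of_lt_of_le ?_ hc
    refine lt_of_lt_of_le hf ?_
    have hcast : ((((Finset.univ.powerset.filter
          (fun W : Finset (Fin d) => T ≤ W.card)).card) * K^d : ℕ) : ℝ) / ((M^d : ℕ) : ℝ)
        = (((Finset.univ.powerset.filter
            (fun W : Finset (Fin d) => T ≤ W.card)).card : ℝ)
          * ((d:ℝ)^2-1)^d) / (2*(d:ℝ)^2)^d := by
      rw [hKdef, hMdef]
      push_cast [Nat.cast_sub hd2]
      ring_nf
    rw [hcast]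
    have h := rho_ge d k hd5
    rw [hTdef]
    exact h
  · -- difference-freeness
    have hKMR : ((K:ℕ):ℝ)/((M:ℕ):ℝ) ≤ 1/2 - 1/(2*((M:ℕ):ℝ)) := by
      have hKR : ((K:ℕ):ℝ) = (d:ℝ)^2 - 1 := by
        rw [hKdef]
        push_cast [Nat.cast_sub hd2]
        ring
      have hMRe : ((M:ℕ):ℝ) = 2*(d:ℝ)^2 := by
        rw [hMdef]; push_cast; ring
      rw [hKR, hMRe]
      have hpos2 : (0:ℝ) < 2*(d:ℝ)^2 := by positivity
      rw [div_le_iff₀ hpos2]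
      have hexp : ((1:ℝ)/2 - 1/(2*(2*(d:ℝ)^2))) * (2*(d:ℝ)^2) = (d:ℝ)^2 - 1/2 := by
        field_simp
      rw [hexp]
      linarith
    exact diff_free d M K T k hM hKMR (by omega) α c
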